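/- Net argument identity: let S be a symmetric N×N matrix, and suppose every unit vector x can be written x = y + z with y ∈ B_s and z ∈ B_b (subsets of the unit ball), and that N_s, N_b are γ-nets of B_s, B_b respectively (γ < 1/12). Then ‖S‖_op ≤ (1 − 12γ)^{−1} [ max_{y∈N_s} |y^T S y| + max_{z∈N_b} |z^T S z| + 2 max_{y∈N_s, z∈N_b} |y^T S z| ]. -/

import Mathlib

open Matrix
open RealInnerProductSpace

/-- The ℓ²→ℓ² operator (spectral) norm of a matrix. -/
noncomputable def opNorm {m n : ℕ} (A : Matrix (Fin m) (Fin n) ℝ) : ℝ :=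
  ‖(Matrix.toEuclideanLin A).toContinuousLinearMap‖

/-- For a self-adjoint real operator, a bound on `|⟪x, T x⟫|` over unit vectors bounds
the operator norm. -/
lemma selfadj_norm_le_of_inner {E : Type*} [NormedAddCommGroup E] [InnerProductSpace ℝ E]
    (T : E →L[ℝ] E) (hsym : ∀ u v : E, ⟪T u, v⟫ = ⟪u, T v⟫) {C : ℝ} (hC : 0 ≤ C)
    (h : ∀ x : E, ‖x‖ = 1 → |⟪x, T x⟫| ≤ C) : ‖T‖ ≤ C := by
  have h' : ∀ u : E, |⟪u, T u⟫| ≤ C * ‖u‖ ^ 2 := by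
    intro u
    rcases eq_or_ne u 0 with rfl | hu
    · simp
    · have hn : (0:ℝ) < ‖u‖ := norm_pos_iff.mpr hu
      have h1 : ‖(‖u‖⁻¹ • u)‖ = 1 := by
        rw [norm_smul, norm_inv, norm_norm, inv_mul_cancel₀ hn.ne']
      have h2 := h _ h1
      rw [_root_.map_smul, real_inner_smul_left, real_inner_smul_right, abs_mul, abs_mul,
        abs_inv, abs_norm] at h2
      have h3 : |⟪u, T u⟫| = ‖u‖ ^ 2 * (‖u‖⁻¹ * (‖u‖⁻¹ * |⟪u, T u⟫|)) := by
        field_simp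
      calc |⟪u, T u⟫| = ‖u‖ ^ 2 * (‖u‖⁻¹ * (‖u‖⁻¹ * |⟪u, T u⟫|)) := h3
        _ ≤ ‖u‖ ^ 2 * C := mul_le_mul_of_nonneg_left h2 (sq_nonneg _)
        _ = C * ‖u‖ ^ 2 := mul_comm _ _
  have pol : ∀ x y : E, 4 * ⟪x, T y⟫ = ⟪x + y, T (x + y)⟫ - ⟪x - y, T (x - y)⟫ := by
    intro x y
    have hyx : ⟪y, T x⟫ = ⟪x, T y⟫ := by
      rw [← hsym x y, real_inner_comm]
    simp only [map_add, map_sub, inner_add_left, inner_add_right, inner_sub_left,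
      inner_sub_right]
    linarith
  refine T.opNorm_le_bound hC ?_
  intro x
  rcases eq_or_ne (T x) 0 with hTx | hTx
  · rw [hTx, norm_zero]
    positivity
  · have hx : x ≠ 0 := by rintro rfl; simp at hTx
    have hxn : (0:ℝ) < ‖x‖ := norm_pos_iff.mpr hx
    have hTxn : (0:ℝ) < ‖T x‖ := norm_pos_iff.mpr hTx
    set y : E := (‖x‖ / ‖T x‖) • T x with hy
    have hyn : ‖y‖ = ‖x‖ := by
      rw [hy, norm_smul, Real.norm_eq_abs, abs_div, abs_norm, abs_norm,
        div_mul_cancel₀ _ hTxn.ne']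
    have hin : ⟪y, T x⟫ = ‖x‖ * ‖T x‖ := by
      rw [hy, real_inner_smul_left, real_inner_self_eq_norm_sq]
      field_simp
    have hp := pol y x
    have b1 := h' (y + x)
    have b2 := h' (y - x)
    have par1 : ‖y + x‖ ^ 2 = ‖y‖ ^ 2 + 2 * ⟪y, x⟫ + ‖x‖ ^ 2 := norm_add_sq_real y x
    have par2 : ‖y - x‖ ^ 2 = ‖y‖ ^ 2 - 2 * ⟪y, x⟫ + ‖x‖ ^ 2 := norm_sub_sq_real y x
    have key : 4 * (‖x‖ * ‖T x‖) ≤ C * (‖y + x‖ ^ 2) + C * (‖y - x‖ ^ 2) := by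
      rw [← hin]
      have := abs_le.mp b1
      have := abs_le.mp b2
      linarith [hp]
    have : ‖x‖ * ‖T x‖ ≤ C * ‖x‖ ^ 2 := by
      rw [par1, par2, hyn] at key
      linarith
    nlinarith
theorem net_bound_opNorm (N : ℕ) (γ : ℝ) (hγ0 : 0 < γ) (hγ : γ < 1 / 12)
    (S : Matrix (Fin N) (Fin N) ℝ) (hS : Sᵀ = S)
    (Bs Bb : Set (EuclideanSpace ℝ (Fin N)))
    (hBs : Bs ⊆ Metric.closedBall 0 1) (hBb : Bb ⊆ Metric.closedBall 0 1)
    (hdecomp : ∀ x : EuclideanSpace ℝ (Fin N), ‖x‖ = 1 →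
      ∃ y ∈ Bs, ∃ z ∈ Bb, x = y + z)
    (Ns Nb : Finset (EuclideanSpace ℝ (Fin N)))
    (hNsSub : ↑Ns ⊆ Bs) (hNbSub : ↑Nb ⊆ Bb)
    (hNsNet : ∀ y ∈ Bs, ∃ y' ∈ Ns, ‖y - y'‖ ≤ γ)
    (hNbNet : ∀ z ∈ Bb, ∃ z' ∈ Nb, ‖z - z'‖ ≤ γ)
    (hNs : Ns.Nonempty) (hNb : Nb.Nonempty) :
    opNorm S ≤ (1 - 12 * γ)⁻¹ *
      (Ns.sup' hNs (fun y => |y ⬝ᵥ S.mulVec y|) +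
        Nb.sup' hNb (fun z => |z ⬝ᵥ S.mulVec z|) +
        2 * Ns.sup' hNs (fun y => Nb.sup' hNb (fun z => |y ⬝ᵥ S.mulVec z|))) := by
  classical
  set T := (Matrix.toEuclideanLin S).toContinuousLinearMap with hTdef
  have key : ∀ u v : EuclideanSpace ℝ (Fin N), ⟪u, T v⟫ = u ⬝ᵥ S.mulVec v := fun u v => by
    rw [EuclideanSpace.inner_eq_star_dotProduct, dotProduct_comm]
    simp [hTdef]
  have hsymdot : ∀ u v : Fin N → ℝ, u ⬝ᵥ S.mulVec v = v ⬝ᵥ S.mulVec u := by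
    intro u v
    calc u ⬝ᵥ S.mulVec v = (u ᵥ* S) ⬝ᵥ v := Matrix.dotProduct_mulVec u S v
      _ = (u ᵥ* Sᵀ) ⬝ᵥ v := by rw [hS]
      _ = (S *ᵥ u) ⬝ᵥ v := by rw [Matrix.vecMul_transpose]
      _ = v ⬝ᵥ S *ᵥ u := dotProduct_comm _ _
  have hsym : ∀ u v : EuclideanSpace ℝ (Fin N), ⟪T u, v⟫ = ⟪u, T v⟫ := by
    intro u v
    rw [real_inner_comm, key, key, hsymdot]
  set A1 := Ns.sup' hNs (fun y => |y ⬝ᵥ S.mulVec y|) with hA1def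
  set A2 := Nb.sup' hNb (fun z => |z ⬝ᵥ S.mulVec z|) with hA2def
  set A3 := Ns.sup' hNs (fun y => Nb.sup' hNb (fun z => |y ⬝ᵥ S.mulVec z|)) with hA3def
  have hy0 : hNs.choose ∈ Ns := hNs.choose_spec
  have hz0 : hNb.choose ∈ Nb := hNb.choose_spec
  have hA1nn : 0 ≤ A1 := by
    rw [hA1def]
    exact le_trans (abs_nonneg _) (Finset.le_sup' (fun y : EuclideanSpace ℝ (Fin N) => |y ⬝ᵥ S.mulVec y|) hy0)
  have hA2nn : 0 ≤ A2 := by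
    rw [hA2def]
    exact le_trans (abs_nonneg _) (Finset.le_sup' (fun z : EuclideanSpace ℝ (Fin N) => |z ⬝ᵥ S.mulVec z|) hz0)
  have hA3nn : 0 ≤ A3 := by
    rw [hA3def]
    exact le_trans (le_trans (abs_nonneg _)
      (Finset.le_sup' (fun z : EuclideanSpace ℝ (Fin N) => |hNs.choose ⬝ᵥ S.mulVec z|) hz0))
      (Finset.le_sup' (fun y : EuclideanSpace ℝ (Fin N) => Nb.sup' hNb (fun z => |y ⬝ᵥ S.mulVec z|)) hy0)
  have hTnn : (0:ℝ) ≤ ‖T‖ := norm_nonneg _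
  -- the norm of an element of the balls
  have hnorm : ∀ u ∈ Metric.closedBall (0 : EuclideanSpace ℝ (Fin N)) 1, ‖u‖ ≤ 1 := by
    intro u hu
    simpa [mem_closedBall_zero_iff] using hu
  -- the bilinear approximation estimate
  have est : ∀ u u' v v' : EuclideanSpace ℝ (Fin N), ‖v‖ ≤ 1 → ‖u'‖ ≤ 1 →
      ‖u - u'‖ ≤ γ → ‖v - v'‖ ≤ γ → |⟪u, T v⟫ - ⟪u', T v'⟫| ≤ 2 * γ * ‖T‖ := by
    intro u u' v v' hv hu' h1 h2
    have e : ⟪u, T v⟫ - ⟪u', T v'⟫ = ⟪u - u', T v⟫ + ⟪u', T (v - v')⟫ := by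
      simp only [map_sub, inner_sub_left, inner_sub_right]
      ring
    have cv : ‖T v‖ ≤ ‖T‖ := by
      calc ‖T v‖ ≤ ‖T‖ * ‖v‖ := T.le_opNorm v
        _ ≤ ‖T‖ * 1 := mul_le_mul_of_nonneg_left hv hTnn
        _ = ‖T‖ := mul_one _
    have b1 : |⟪u - u', T v⟫| ≤ γ * ‖T‖ := by
      calc |⟪u - u', T v⟫| ≤ ‖u - u'‖ * ‖T v‖ := abs_real_inner_le_norm _ _
        _ ≤ γ * ‖T‖ := mul_le_mul h1 cv (norm_nonneg _) hγ0.le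
    have cw : ‖T (v - v')‖ ≤ ‖T‖ * γ :=
      (T.le_opNorm _).trans (mul_le_mul_of_nonneg_left h2 hTnn)
    have b2 : |⟪u', T (v - v')⟫| ≤ γ * ‖T‖ := by
      calc |⟪u', T (v - v')⟫| ≤ ‖u'‖ * ‖T (v - v')‖ := abs_real_inner_le_norm _ _
        _ ≤ 1 * (‖T‖ * γ) := mul_le_mul hu' cw (norm_nonneg _) zero_le_one
        _ = γ * ‖T‖ := by ring
    calc |⟪u, T v⟫ - ⟪u', T v'⟫| = |⟪u - u', T v⟫ + ⟪u', T (v - v')⟫| := by rw [e]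
      _ ≤ |⟪u - u', T v⟫| + |⟪u', T (v - v')⟫| := abs_add_le _ _
      _ ≤ 2 * γ * ‖T‖ := by linarith
  -- the key self-adjoint bound
  have hmain : ‖T‖ ≤ (A1 + A2 + 2 * A3) + 8 * γ * ‖T‖ := by
    apply selfadj_norm_le_of_inner T hsym
    · nlinarith
    · intro x hx1
      obtain ⟨y, hy, z, hz, hx⟩ := hdecomp x hx1
      obtain ⟨y', hy', hyy'⟩ := hNsNet y hy
      obtain ⟨z', hz', hzz'⟩ := hNbNet z hz
      have hyn : ‖y‖ ≤ 1 := hnorm y (hBs hy)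
      have hzn : ‖z‖ ≤ 1 := hnorm z (hBb hz)
      have hy'n : ‖y'‖ ≤ 1 := hnorm y' (hBs (hNsSub hy'))
      have hz'n : ‖z'‖ ≤ 1 := hnorm z' (hBb (hNbSub hz'))
      have hxTx : ⟪x, T x⟫ = ⟪y, T y⟫ + ⟪z, T z⟫ + 2 * ⟪y, T z⟫ := by
        have hzy : ⟪z, T y⟫ = ⟪y, T z⟫ := by rw [← hsym y z, real_inner_comm]
        rw [hx]
        simp only [map_add, inner_add_left, inner_add_right]
        linarith
      have d1 := est y y' y y' hyn hy'n hyy' hyy'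
      have d2 := est z z' z z' hzn hz'n hzz' hzz'
      have d3 := est y y' z z' hzn hy'n hyy' hzz'
      have s1 : |⟪y', T y'⟫| ≤ A1 := by
        rw [key, hA1def]
        exact Finset.le_sup' (fun y : EuclideanSpace ℝ (Fin N) => |y ⬝ᵥ S.mulVec y|) hy'
      have s2 : |⟪z', T z'⟫| ≤ A2 := by
        rw [key, hA2def]
        exact Finset.le_sup' (fun z : EuclideanSpace ℝ (Fin N) => |z ⬝ᵥ S.mulVec z|) hz'
      have s3 : |⟪y', T z'⟫| ≤ A3 := by
        rw [key, hA3def]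
        exact le_trans (Finset.le_sup' (fun z : EuclideanSpace ℝ (Fin N) => |y' ⬝ᵥ S.mulVec z|) hz')
          (Finset.le_sup' (fun y : EuclideanSpace ℝ (Fin N) => Nb.sup' hNb (fun z => |y ⬝ᵥ S.mulVec z|)) hy')
      have t1 : |⟪y, T y⟫| ≤ A1 + 2 * γ * ‖T‖ := by
        have := abs_sub_abs_le_abs_sub (⟪y, T y⟫) (⟪y', T y'⟫)
        linarith
      have t2 : |⟪z, T z⟫| ≤ A2 + 2 * γ * ‖T‖ := by
        have := abs_sub_abs_le_abs_sub (⟪z, T z⟫) (⟪z', T z'⟫)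
        linarith
      have t3 : |⟪y, T z⟫| ≤ A3 + 2 * γ * ‖T‖ := by
        have := abs_sub_abs_le_abs_sub (⟪y, T z⟫) (⟪y', T z'⟫)
        linarith
      calc |⟪x, T x⟫| = |⟪y, T y⟫ + ⟪z, T z⟫ + 2 * ⟪y, T z⟫| := by rw [hxTx]
        _ ≤ |⟪y, T y⟫ + ⟪z, T z⟫| + |2 * ⟪y, T z⟫| := abs_add_le _ _
        _ ≤ |⟪y, T y⟫| + |⟪z, T z⟫| + 2 * |⟪y, T z⟫| := by
            have := abs_add_le (⟪y, T y⟫) (⟪z, T z⟫)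
            rw [abs_mul]
            simp only [abs_two]
            linarith
        _ ≤ (A1 + A2 + 2 * A3) + 8 * γ * ‖T‖ := by linarith
  have h12 : (0:ℝ) < 1 - 12 * γ := by linarith
  have hfin : (1 - 12 * γ) * ‖T‖ ≤ A1 + A2 + 2 * A3 := by nlinarith
  show ‖T‖ ≤ (1 - 12 * γ)⁻¹ * (A1 + A2 + 2 * A3)
  rw [le_inv_mul_iff₀ h12]
  exact hfin
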